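/- Let E be the infinite EES with events e_{ij} for 0 ≤ j ≤ i (i ranging over ℕ), all labelled a, with e_{ij} ≤ e_{ik} iff j ≤ k; and let F be the infinite EES with events e'_{ij} for i, j ∈ ℕ, all labelled a, with e'_{ij} ≤ e'_{ik} iff j ≤ k. Then E and F are pomset bisimilar but neither weak history preserving bisimilar nor history preserving bisimilar. -/

import Mathlib

/-- A labelled prime event structure over alphabet `A`. -/
structure PES (A : Type*) where
  E : Type*
  le : E → E → Prop
  conflict : E → E → Prop
  lab : E → A
  le_refl : ∀ e, le e e
  le_trans : ∀ e e' e'', le e e' → le e' e'' → le e e''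
  le_antisymm : ∀ e e', le e e' → le e' e → e = e'
  finite_past : ∀ e, Set.Finite {e' | le e' e ∧ e' ≠ e}
  conflict_irrefl : ∀ e, ¬ conflict e e
  conflict_symm : ∀ e e', conflict e e' → conflict e' e
  conflict_inherit : ∀ e e' e'', le e e' → e ≠ e' → conflict e e'' → conflict e' e''

namespace PES

variable {A : Type*}

/-- A coherence space: a PES with empty (strict) causality. -/
def IsCS (P : PES A) : Prop := ∀ e e', P.le e e' → e = e'

/-- An elementary event structure: a PES with empty conflict. -/
def IsEES (P : PES A) : Prop := ∀ e e', ¬ P.conflict e e'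

/-- Concurrency. -/
def co (P : PES A) (e e' : P.E) : Prop :=
  ¬ P.le e e' ∧ ¬ P.le e' e ∧ ¬ P.conflict e e'

/-- Configurations: finite, conflict-free, downward-closed sets of events. -/
def Config (P : PES A) (X : Set P.E) : Prop :=
  X.Finite ∧ (∀ e ∈ X, ∀ e' ∈ X, ¬ P.conflict e e') ∧
    (∀ e ∈ X, ∀ e', P.le e' e → e' ∈ X)

/-- Single-event labelled transition between configurations. -/
def Trans (P : PES A) (X : Set P.E) (a : A) (X' : Set P.E) : Prop :=
  P.Config X ∧ P.Config X' ∧ ∃ e, e ∉ X ∧ X' = insert e X ∧ P.lab e = a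

/-- `X` can perform the sequential trace `w`. -/
def TraceFrom (P : PES A) : Set P.E → List A → Prop
  | X, [] => P.Config X
  | X, a :: w => ∃ X', P.Trans X a X' ∧ P.TraceFrom X' w

/-- Sequential traces of a PES. -/
def STr (P : PES A) (w : List A) : Prop := P.TraceFrom ∅ w

/-- Interleaving trace equivalence. -/
def ITrEq (P Q : PES A) : Prop := ∀ w : List A, P.STr w ↔ Q.STr w

/-- Interleaving bisimulation. -/
def IBisim (P Q : PES A) (R : Set P.E → Set Q.E → Prop) : Prop :=
  R ∅ ∅ ∧ ∀ X Y, R X Y →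
    (∀ a X', P.Trans X a X' → ∃ Y', Q.Trans Y a Y' ∧ R X' Y') ∧
    (∀ a Y', Q.Trans Y a Y' → ∃ X', P.Trans X a X' ∧ R X' Y')

/-- Interleaving bisimilarity. -/
def IBisimilar (P Q : PES A) : Prop := ∃ R, IBisim P Q R

/-- Step transition, labelled by the multiset of labels of a nonempty set of
pairwise concurrent events added at once. -/
def StepTrans (P : PES A) (X : Set P.E) (m : Multiset A) (X' : Set P.E) : Prop :=
  P.Config X ∧ P.Config X' ∧ X ⊆ X' ∧ ∃ G : Finset P.E, ↑G = X' \ X ∧ G.Nonempty ∧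
    (∀ e ∈ G, ∀ e' ∈ G, e ≠ e' → P.co e e') ∧ Multiset.map P.lab G.val = m

/-- `X` can perform the step trace `s`. -/
def StepTraceFrom (P : PES A) : Set P.E → List (Multiset A) → Prop
  | X, [] => P.Config X
  | X, m :: s => ∃ X', P.StepTrans X m X' ∧ P.StepTraceFrom X' s

/-- Step traces of a PES. -/
def StTr (P : PES A) (s : List (Multiset A)) : Prop := P.StepTraceFrom ∅ s

/-- Step trace equivalence. -/
def STrEq (P Q : PES A) : Prop := ∀ s : List (Multiset A), P.StTr s ↔ Q.StTr s

/-- Step bisimulation. -/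
def SBisim (P Q : PES A) (R : Set P.E → Set Q.E → Prop) : Prop :=
  R ∅ ∅ ∧ ∀ X Y, R X Y →
    (∀ m X', P.StepTrans X m X' → ∃ Y', Q.StepTrans Y m Y' ∧ R X' Y') ∧
    (∀ m Y', Q.StepTrans Y m Y' → ∃ X', P.StepTrans X m X' ∧ R X' Y')

/-- Step bisimilarity. -/
def SBisimilar (P Q : PES A) : Prop := ∃ R, SBisim P Q R

/-- `f` restricts to a label-preserving order-isomorphism from `X` onto `Y`. -/
def IsoOn (P Q : PES A) (f : P.E → Q.E) (X : Set P.E) (Y : Set Q.E) : Prop :=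
  Set.BijOn f X Y ∧ (∀ e ∈ X, ∀ e' ∈ X, (P.le e e' ↔ Q.le (f e) (f e'))) ∧
    ∀ e ∈ X, Q.lab (f e) = P.lab e

/-- The labelled posets induced by `X` and `Y` are isomorphic (same pomset). -/
def PIso (P Q : PES A) (X : Set P.E) (Y : Set Q.E) : Prop :=
  ∃ f, IsoOn P Q f X Y

/-- Pomset trace equivalence: same sets of pomsets of configurations. -/
def PTrEq (P Q : PES A) : Prop :=
  (∀ X, P.Config X → ∃ Y, Q.Config Y ∧ PIso P Q X Y) ∧
  (∀ Y, Q.Config Y → ∃ X, P.Config X ∧ PIso P Q X Y)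

/-- Pomset transition: strictly extending a configuration. -/
def PomTrans (P : PES A) (X X' : Set P.E) : Prop :=
  P.Config X ∧ P.Config X' ∧ X ⊂ X'

/-- Pomset bisimulation: matched extensions must add isomorphic pomsets. -/
def PBisim (P Q : PES A) (R : Set P.E → Set Q.E → Prop) : Prop :=
  R ∅ ∅ ∧ ∀ X Y, R X Y →
    (∀ X', P.PomTrans X X' →
      ∃ Y', Q.PomTrans Y Y' ∧ PIso P Q (X' \ X) (Y' \ Y) ∧ R X' Y') ∧
    (∀ Y', Q.PomTrans Y Y' →
      ∃ X', P.PomTrans X X' ∧ PIso P Q (X' \ X) (Y' \ Y) ∧ R X' Y')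

/-- Pomset bisimilarity. -/
def PBisimilar (P Q : PES A) : Prop := ∃ R, PBisim P Q R

/-- Weak history preserving bisimulation. -/
def WHBisim (P Q : PES A) (R : Set P.E → Set Q.E → Prop) : Prop :=
  R ∅ ∅ ∧ ∀ X Y, R X Y → PIso P Q X Y ∧
    (∀ a X', P.Trans X a X' → ∃ Y', Q.Trans Y a Y' ∧ R X' Y') ∧
    (∀ a Y', Q.Trans Y a Y' → ∃ X', P.Trans X a X' ∧ R X' Y')

/-- Weak history preserving bisimilarity. -/
def WHBisimilar (P Q : PES A) : Prop := ∃ R, WHBisim P Q R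

/-- History preserving bisimulation: triples `(X, Y, f)`. -/
def HBisim (P Q : PES A) (R : Set P.E → Set Q.E → (P.E → Q.E) → Prop) : Prop :=
  (∃ f, R ∅ ∅ f) ∧ ∀ X Y f, R X Y f → IsoOn P Q f X Y ∧
    (∀ a X', P.Trans X a X' →
      ∃ Y' f', Q.Trans Y a Y' ∧ R X' Y' f' ∧ ∀ e ∈ X, f' e = f e) ∧
    (∀ a Y', Q.Trans Y a Y' →
      ∃ X' f', P.Trans X a X' ∧ R X' Y' f' ∧ ∀ e ∈ X, f' e = f e)

/-- History preserving bisimilarity. -/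
def HBisimilar (P Q : PES A) : Prop := ∃ R, HBisim P Q R

/-- Closure under backward transitions, as needed for hereditary hp-bisimulations. -/
def Hereditary (P Q : PES A) (R : Set P.E → Set Q.E → (P.E → Q.E) → Prop) : Prop :=
  ∀ X Y f, R X Y f →
    (∀ a X', P.Trans X' a X → R X' (f '' X') f) ∧
    (∀ a Y', Q.Trans Y' a Y → R {e ∈ X | f e ∈ Y'} Y' f)

/-- Hereditary history preserving bisimilarity. -/
def HHBisimilar (P Q : PES A) : Prop := ∃ R, HBisim P Q R ∧ Hereditary P Q R

/-- Isomorphism of PESs. -/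
def Iso (P Q : PES A) : Prop :=
  ∃ f : P.E ≃ Q.E, (∀ e e', P.le e e' ↔ Q.le (f e) (f e')) ∧
    (∀ e e', P.conflict e e' ↔ Q.conflict (f e) (f e')) ∧
    ∀ e, Q.lab (f e) = P.lab e

end PES


/-- Disjoint chains of lengths 1, 2, 3, ...: events `e_{ij}` for `j ≤ i`,
with `e_{ij} ≤ e_{ik}` iff `j ≤ k`; all labelled alike. -/
def eesTri : PES Unit where
  E := {p : ℕ × ℕ // p.2 ≤ p.1}
  le p q := p.val.1 = q.val.1 ∧ p.val.2 ≤ q.val.2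
  conflict _ _ := False
  lab _ := ()
  le_refl _ := ⟨rfl, le_refl _⟩
  le_trans _ _ _ h h' := ⟨h.1.trans h'.1, h.2.trans h'.2⟩
  le_antisymm _ _ h h' := Subtype.ext (Prod.ext h.1 (le_antisymm h.2 h'.2))
  finite_past e := by
    have h : Set.Finite ({e.val.1} ×ˢ Set.Iic e.val.2 : Set (ℕ × ℕ)) :=
      (Set.finite_singleton _).prod (Set.finite_Iic _)
    refine Set.Finite.subset (h.preimage Subtype.val_injective.injOn) ?_
    rintro p ⟨⟨h1, h2⟩, -⟩
    exact ⟨h1, h2⟩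
  conflict_irrefl _ h := h
  conflict_symm _ _ h := h
  conflict_inherit _ _ _ _ _ h := h

/-- Countably many disjoint infinite chains: events `e'_{ij}` for all `i, j`,
with `e'_{ij} ≤ e'_{ik}` iff `j ≤ k`; all labelled alike. -/
def eesGrid : PES Unit where
  E := ℕ × ℕ
  le p q := p.1 = q.1 ∧ p.2 ≤ q.2
  conflict _ _ := False
  lab _ := ()
  le_refl _ := ⟨rfl, le_refl _⟩
  le_trans _ _ _ h h' := ⟨h.1.trans h'.1, h.2.trans h'.2⟩
  le_antisymm _ _ h h' := Prod.ext h.1 (le_antisymm h.2 h'.2)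
  finite_past e := by
    refine Set.Finite.subset
      (((Set.finite_singleton e.1).prod (Set.finite_Iic e.2))) ?_
    rintro p ⟨⟨h1, h2⟩, -⟩
    exact ⟨h1, h2⟩
  conflict_irrefl _ h := h
  conflict_symm _ _ h := h
  conflict_inherit _ _ _ _ _ h := h


namespace InfEESAux

open PES

/-- The heights function of a configuration of `eesGrid`. -/
lemma grid_height {Y : Set eesGrid.E} (hY : eesGrid.Config Y) :
    ∃ h : ℕ → ℕ, ∀ i j : ℕ, (((i, j) : eesGrid.E) ∈ Y ↔ j < h i) := by
  have key : ∀ i : ℕ, ∃ m : ℕ, ∀ j : ℕ, (((i, j) : eesGrid.E) ∈ Y ↔ j < m) := by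
    intro i
    have hfin : {j : ℕ | ((i, j) : eesGrid.E) ∈ Y}.Finite := by
      have heq : {j : ℕ | ((i, j) : eesGrid.E) ∈ Y} = Prod.mk i ⁻¹' Y := rfl
      rw [heq]
      exact hY.1.preimage (fun a _ b _ hab => congrArg Prod.snd hab)
    have hne : {j : ℕ | ((i, j) : eesGrid.E) ∉ Y}.Nonempty := by
      obtain ⟨N, hN⟩ := hfin.bddAbove
      refine ⟨N + 1, fun hmem => ?_⟩
      have := hN hmem
      omega
    refine ⟨sInf {j : ℕ | ((i, j) : eesGrid.E) ∉ Y}, fun j => ?_⟩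
    have hmem := Nat.sInf_mem hne
    constructor
    · intro hj
      by_contra hlt
      push_neg at hlt
      exact hmem (hY.2.2 _ hj _ ⟨rfl, hlt⟩)
    · intro hj
      by_contra hc
      have hle : sInf {j : ℕ | ((i, j) : eesGrid.E) ∉ Y} ≤ j := Nat.sInf_le hc
      omega
  choose h hh using key
  exact ⟨h, hh⟩

/-- The heights function of a configuration of `eesTri`. -/
lemma tri_height {X : Set eesTri.E} (hX : eesTri.Config X) :
    ∃ h : ℕ → ℕ, ∀ (i j : ℕ) (hj : j ≤ i), ((⟨(i, j), hj⟩ : eesTri.E) ∈ X ↔ j < h i) := by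
  have key : ∀ i : ℕ, ∃ m : ℕ, ∀ (j : ℕ) (hj : j ≤ i),
      ((⟨(i, j), hj⟩ : eesTri.E) ∈ X ↔ j < m) := by
    intro i
    set S : Set ℕ := {j : ℕ | ∃ hj : j ≤ i, (⟨(i, j), hj⟩ : eesTri.E) ∈ X} with hS
    have hne : Sᶜ.Nonempty := by
      refine ⟨i + 1, fun hmem => ?_⟩
      obtain ⟨hj, -⟩ := hmem
      omega
    refine ⟨sInf Sᶜ, fun j hj => ?_⟩
    have hmem : sInf Sᶜ ∈ Sᶜ := Nat.sInf_mem hne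
    constructor
    · intro hjm
      by_contra hlt
      push_neg at hlt
      have hle : sInf Sᶜ ≤ i := le_trans hlt hj
      exact hmem ⟨hle, hX.2.2 _ hjm ⟨(i, sInf Sᶜ), hle⟩ ⟨rfl, hlt⟩⟩
    · intro hjlt
      by_contra hc
      have hjc : j ∈ Sᶜ := fun hjS => by
        obtain ⟨hj', hmem'⟩ := hjS
        exact hc hmem'
      have hle : sInf Sᶜ ≤ j := Nat.sInf_le hjc
      omega
  choose h hh using key
  exact ⟨h, hh⟩

lemma bound_fst {Y : Set eesGrid.E} (hY : Y.Finite) :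
    ∃ N : ℕ, ∀ p ∈ Y, (p : ℕ × ℕ).1 < N := by
  obtain ⟨N, hN⟩ := (hY.image Prod.fst).bddAbove
  exact ⟨N + 1, fun p hp => by
    have := hN (Set.mem_image_of_mem Prod.fst hp); omega⟩

lemma bound_snd {Y : Set eesGrid.E} (hY : Y.Finite) :
    ∃ N : ℕ, ∀ p ∈ Y, (p : ℕ × ℕ).2 < N := by
  obtain ⟨N, hN⟩ := (hY.image Prod.snd).bddAbove
  exact ⟨N + 1, fun p hp => by
    have := hN (Set.mem_image_of_mem Prod.snd hp); omega⟩

lemma bound_tri {X : Set eesTri.E} (hX : X.Finite) :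
    ∃ N : ℕ, ∀ e ∈ X, (e : eesTri.E).val.1 < N := by
  obtain ⟨N, hN⟩ := (hX.image (fun e => (e : eesTri.E).val.1)).bddAbove
  exact ⟨N + 1, fun e he => by
    have := hN (Set.mem_image_of_mem _ he); omega⟩

lemma tri_config_empty : eesTri.Config (∅ : Set eesTri.E) :=
  ⟨Set.finite_empty, fun e he => absurd he (Set.notMem_empty e),
    fun e he => absurd he (Set.notMem_empty e)⟩

lemma grid_config_empty : eesGrid.Config (∅ : Set eesGrid.E) :=
  ⟨Set.finite_empty, fun e he => absurd he (Set.notMem_empty e),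
    fun e he => absurd he (Set.notMem_empty e)⟩

def e00 : eesTri.E := ⟨(0, 0), le_refl 0⟩

lemma tri_config_e00 : eesTri.Config ({e00} : Set eesTri.E) := by
  refine ⟨Set.finite_singleton _, fun e _ e' _ h => h, ?_⟩
  rintro e he e' hle
  rcases Set.mem_singleton_iff.mp he with rfl
  have h1 : (e' : eesTri.E).val.1 = 0 := hle.1
  have h2 : (e' : eesTri.E).val.2 ≤ 0 := hle.2
  have heq : e' = e00 :=
    Subtype.ext (Prod.ext h1 (show (e' : eesTri.E).val.2 = 0 by omega))
  simp [heq]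

lemma trans_e00 : eesTri.Trans ∅ () {e00} :=
  ⟨tri_config_empty, tri_config_e00, e00, Set.notMem_empty _, by simp, rfl⟩

lemma grid_singleton {q : eesGrid.E} (hq : eesGrid.Config {q}) : (q : ℕ × ℕ).2 = 0 := by
  have hmem : ((q.1, 0) : eesGrid.E) ∈ ({q} : Set eesGrid.E) :=
    hq.2.2 q rfl _ ⟨rfl, Nat.zero_le _⟩
  have heq := Set.mem_singleton_iff.mp hmem
  exact (congrArg Prod.snd heq).symm

lemma grid_config_pair (i : ℕ) :
    eesGrid.Config (insert ((i, 1) : eesGrid.E) {((i, 0) : eesGrid.E)}) := by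
  refine ⟨(Set.finite_singleton _).insert _, fun e _ e' _ h => h, ?_⟩
  rintro e he e' hle
  rcases Set.mem_insert_iff.mp he with rfl | he
  · have h1 : (e' : ℕ × ℕ).1 = i := hle.1
    have h2 : (e' : ℕ × ℕ).2 ≤ 1 := hle.2
    rcases Nat.le_one_iff_eq_zero_or_eq_one.mp h2 with h0 | h0
    · exact Set.mem_insert_iff.mpr (Or.inr (Set.mem_singleton_iff.mpr (Prod.ext h1 h0)))
    · exact Set.mem_insert_iff.mpr (Or.inl (Prod.ext h1 h0))
  · rcases Set.mem_singleton_iff.mp he with rfl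
    have h1 : (e' : ℕ × ℕ).1 = i := hle.1
    have h2 : (e' : ℕ × ℕ).2 ≤ 0 := hle.2
    exact Set.mem_insert_iff.mpr (Or.inr (Set.mem_singleton_iff.mpr
      (Prod.ext h1 (show (e' : ℕ × ℕ).2 = 0 by omega))))

lemma grid_config_single (i : ℕ) : eesGrid.Config ({((i, 0) : eesGrid.E)} : Set eesGrid.E) := by
  refine ⟨Set.finite_singleton _, fun e _ e' _ h => h, ?_⟩
  rintro e he e' hle
  rcases Set.mem_singleton_iff.mp he with rfl
  have h1 : (e' : ℕ × ℕ).1 = i := hle.1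
  have h2 : (e' : ℕ × ℕ).2 ≤ 0 := hle.2
  exact Set.mem_singleton_iff.mpr (Prod.ext h1 (show (e' : ℕ × ℕ).2 = 0 by omega))

lemma grid_trans_pair (i : ℕ) :
    eesGrid.Trans {((i, 0) : eesGrid.E)} ()
      (insert ((i, 1) : eesGrid.E) {((i, 0) : eesGrid.E)}) := by
  refine ⟨grid_config_single i, grid_config_pair i, (i, 1), ?_, rfl, rfl⟩
  intro hmem
  have heq := Set.mem_singleton_iff.mp hmem
  have : (1 : ℕ) = 0 := congrArg Prod.snd heq
  omega

/-- No label/order iso from `{e00, e}` (with `e ≠ e00`) onto a 2-chain of the grid. -/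
lemma no_iso (e : eesTri.E) (he : e ≠ e00) (i : ℕ) (f : eesTri.E → eesGrid.E)
    (hf : IsoOn eesTri eesGrid f (insert e {e00})
      (insert ((i, 1) : eesGrid.E) {((i, 0) : eesGrid.E)})) : False := by
  obtain ⟨hbij, hord, -⟩ := hf
  obtain ⟨u, hu, hfu⟩ := hbij.2.2 (Set.mem_insert_iff.mpr (Or.inr rfl))
  obtain ⟨v, hv, hfv⟩ := hbij.2.2 (Set.mem_insert ((i, 1) : eesGrid.E) _)
  have huv : u ≠ v := by
    intro h
    rw [h, hfv] at hfu
    have : (1 : ℕ) = 0 := congrArg Prod.snd hfu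
    omega
  have hle : eesTri.le u v := by
    apply (hord u hu v hv).mpr
    rw [hfu, hfv]
    exact ⟨rfl, Nat.zero_le _⟩
  have hcomp : eesTri.le e e00 ∨ eesTri.le e00 e := by
    have hu2 : u = e ∨ u = e00 := Set.mem_insert_iff.mp hu
    have hv2 : v = e ∨ v = e00 := Set.mem_insert_iff.mp hv
    rcases hu2 with hu' | hu' <;> rcases hv2 with hv' | hv'
    · exact absurd (hu'.trans hv'.symm) huv
    · rw [hu', hv'] at hle; exact Or.inl hle
    · rw [hu', hv'] at hle; exact Or.inr hle
    · exact absurd (hu'.trans hv'.symm) huv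
  apply he
  have h1 : (e : eesTri.E).val.1 = 0 := by
    rcases hcomp with h | h
    · exact h.1
    · exact h.1.symm
  have h2 : (e : eesTri.E).val.2 ≤ (e : eesTri.E).val.1 := e.property
  exact Subtype.ext (Prod.ext h1 (show (e : eesTri.E).val.2 = 0 by omega))

/-- Forward matching: any pomset extension of a tri-configuration can be mimicked
from any grid-configuration using fresh chains. -/
lemma forward_match {X X' : Set eesTri.E} {Y : Set eesGrid.E}
    (hY : eesGrid.Config Y) (ht : eesTri.PomTrans X X') :
    ∃ Y', eesGrid.PomTrans Y Y' ∧ PIso eesTri eesGrid (X' \ X) (Y' \ Y) ∧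
      eesGrid.Config Y' := by
  obtain ⟨hX, hX', hss⟩ := ht
  obtain ⟨m, hm⟩ := tri_height hX
  obtain ⟨m', hm'⟩ := tri_height hX'
  obtain ⟨N, hN⟩ := bound_fst hY.1
  have hdiff : ∀ e : eesTri.E, e ∈ X' \ X ↔
      (m e.val.1 ≤ e.val.2 ∧ e.val.2 < m' e.val.1) := by
    rintro ⟨⟨i, j⟩, hj⟩
    show _ ∈ X' \ X ↔ (m i ≤ j ∧ j < m' i)
    refine (Set.mem_diff _).trans ((and_congr (hm' i j hj) (not_congr (hm i j hj))).trans ?_)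
    omega
  set f : eesTri.E → eesGrid.E := fun e => (N + e.val.1, e.val.2 - m e.val.1) with hfdef
  set Y' : Set eesGrid.E := Y ∪ f '' (X' \ X) with hY'def
  have himg_not : ∀ e ∈ X' \ X, f e ∉ Y := by
    intro e _ hmem
    have h1 : N + (e : eesTri.E).val.1 < N := hN _ hmem
    omega
  have hinj : Set.InjOn f (X' \ X) := by
    intro a ha b hb hab
    have ha' := (hdiff a).mp ha
    have hb' := (hdiff b).mp hb
    have h1 : N + a.val.1 = N + b.val.1 := congrArg Prod.fst hab
    have h1' : a.val.1 = b.val.1 := by omega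
    have h2 : a.val.2 - m a.val.1 = b.val.2 - m b.val.1 := congrArg Prod.snd hab
    rw [h1'] at ha' h2
    exact Subtype.ext (Prod.ext h1' (by omega))
  have hYdiff : Y' \ Y = f '' (X' \ X) := by
    apply Set.eq_of_subset_of_subset
    · rintro p ⟨hp, hpn⟩
      rcases hp with hp | hp
      · exact absurd hp hpn
      · exact hp
    · rintro p ⟨e, he, rfl⟩
      exact ⟨Or.inr ⟨e, he, rfl⟩, himg_not e he⟩
  have hconfY' : eesGrid.Config Y' := by
    refine ⟨hY.1.union ((hX'.1.subset Set.diff_subset).image f),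
      fun a _ b _ h => h, ?_⟩
    rintro p hp p' hle
    rcases hp with hp | ⟨e, he, rfl⟩
    · exact Or.inl (hY.2.2 p hp p' hle)
    · obtain ⟨⟨i, j⟩, hj⟩ := e
      have he' : m i ≤ j ∧ j < m' i := (hdiff _).mp he
      obtain ⟨hp1', hp2'⟩ := hle
      have hp1 : p'.1 = N + i := hp1'
      have hp2 : p'.2 ≤ j - m i := hp2'
      right
      have hji : p'.2 + m i ≤ i := by omega
      refine ⟨⟨(i, p'.2 + m i), hji⟩, (hdiff _).mpr ?_, ?_⟩
      · show m i ≤ p'.2 + m i ∧ p'.2 + m i < m' i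
        omega
      · show ((N + i, p'.2 + m i - m i) : eesGrid.E) = p'
        have hred : p'.2 + m i - m i = p'.2 := by omega
        rw [hred]
        exact Prod.ext hp1.symm rfl
  obtain ⟨d, hdX', hdX⟩ := Set.exists_of_ssubset hss
  refine ⟨Y', ⟨hY, hconfY', ?_, ?_⟩, ⟨f, ?_, ?_, fun e _ => rfl⟩, hconfY'⟩
  · exact Set.subset_union_left
  · intro hsub
    exact himg_not d ⟨hdX', hdX⟩ (hsub (Or.inr ⟨d, ⟨hdX', hdX⟩, rfl⟩))
  · rw [hYdiff]
    exact ⟨fun e he => ⟨e, he, rfl⟩, hinj, fun p hp => hp⟩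
  · intro a ha b hb
    have ha' := (hdiff a).mp ha
    have hb' := (hdiff b).mp hb
    show (a.val.1 = b.val.1 ∧ a.val.2 ≤ b.val.2) ↔
      (N + a.val.1 = N + b.val.1 ∧ a.val.2 - m a.val.1 ≤ b.val.2 - m b.val.1)
    constructor
    · rintro ⟨h1, h2⟩
      have hma : m a.val.1 = m b.val.1 := by rw [h1]
      exact ⟨by rw [h1], by omega⟩
    · rintro ⟨h1, h2⟩
      have h1' : a.val.1 = b.val.1 := by omega
      have hma : m a.val.1 = m b.val.1 := by rw [h1']
      exact ⟨h1', by omega⟩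

/-- Backward matching: any pomset extension of a grid-configuration can be mimicked
from any tri-configuration using fresh, long-enough chains. -/
lemma backward_match {Y Y' : Set eesGrid.E} {X : Set eesTri.E}
    (hX : eesTri.Config X) (ht : eesGrid.PomTrans Y Y') :
    ∃ X', eesTri.PomTrans X X' ∧ PIso eesTri eesGrid (X' \ X) (Y' \ Y) ∧
      eesTri.Config X' := by
  obtain ⟨hY, hY', hss⟩ := ht
  obtain ⟨h, hh⟩ := grid_height hY
  obtain ⟨h', hh'⟩ := grid_height hY'
  obtain ⟨K, hK⟩ := bound_snd hY'.1
  obtain ⟨B0, hB0⟩ := bound_tri hX.1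
  set B : ℕ := max B0 K with hBdef
  have hB0B : B0 ≤ B := le_max_left _ _
  have hKB : K ≤ B := le_max_right _ _
  have hdiff : ∀ p : eesGrid.E, p ∈ Y' \ Y ↔ (h p.1 ≤ p.2 ∧ p.2 < h' p.1) := by
    rintro ⟨i, j⟩
    show _ ∈ Y' \ Y ↔ (h i ≤ j ∧ j < h' i)
    refine (Set.mem_diff _).trans ((and_congr (hh' i j) (not_congr (hh i j))).trans ?_)
    omega
  have hbnd : ∀ p : eesGrid.E, p ∈ Y' \ Y → p.2 - h p.1 ≤ B + p.1 := by
    intro p hp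
    have := hK p hp.1
    omega
  set g : ℕ × ℕ → eesTri.E := fun p =>
    if hc : p.2 - h p.1 ≤ B + p.1 then ⟨(B + p.1, p.2 - h p.1), hc⟩
    else ⟨(0, 0), le_refl 0⟩ with hgdef
  have hgval : ∀ (p : eesGrid.E) (hp : p ∈ Y' \ Y),
      g p = ⟨(B + p.1, p.2 - h p.1), hbnd p hp⟩ := by
    intro p hp
    simp only [hgdef, dif_pos (hbnd p hp)]
    exact dif_pos (hbnd p hp)
  set X' : Set eesTri.E := X ∪ g '' (Y' \ Y) with hX'def
  have himg_not : ∀ p ∈ Y' \ Y, g p ∉ X := by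
    intro p hp hmem
    rw [hgval p hp] at hmem
    have h1 : B + p.1 < B0 := hB0 _ hmem
    omega
  have hinj : Set.InjOn g (Y' \ Y) := by
    intro a ha b hb hab
    rw [hgval a ha, hgval b hb] at hab
    have h1 : B + a.1 = B + b.1 := congrArg (fun e : eesTri.E => e.val.1) hab
    have h1' : a.1 = b.1 := by omega
    have h2 : a.2 - h a.1 = b.2 - h b.1 := congrArg (fun e : eesTri.E => e.val.2) hab
    have ha' := (hdiff a).mp ha
    have hb' := (hdiff b).mp hb
    rw [h1'] at ha' h2
    exact Prod.ext h1' (by omega)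
  have hXdiff : X' \ X = g '' (Y' \ Y) := by
    apply Set.eq_of_subset_of_subset
    · rintro e ⟨he, hen⟩
      rcases he with he | he
      · exact absurd he hen
      · exact he
    · rintro e ⟨p, hp, rfl⟩
      exact ⟨Or.inr ⟨p, hp, rfl⟩, himg_not p hp⟩
  have hconfX' : eesTri.Config X' := by
    refine ⟨hX.1.union ((hY'.1.subset Set.diff_subset).image g),
      fun a _ b _ hc => hc, ?_⟩
    rintro e he e' hle
    rcases he with he | ⟨p, hp, rfl⟩
    · exact Or.inl (hX.2.2 e he e' hle)
    · rw [hgval p hp] at hle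
      obtain ⟨hp1', hp2'⟩ := hle
      have hp1 : (e' : eesTri.E).val.1 = B + p.1 := hp1'
      have hp2 : (e' : eesTri.E).val.2 ≤ p.2 - h p.1 := hp2'
      have hp' := (hdiff p).mp hp
      right
      have hmem2 : ((p.1, e'.val.2 + h p.1) : eesGrid.E) ∈ Y' \ Y := by
        refine (hdiff (p.1, e'.val.2 + h p.1)).mpr ?_
        show h p.1 ≤ e'.val.2 + h p.1 ∧ e'.val.2 + h p.1 < h' p.1
        omega
      refine ⟨(p.1, e'.val.2 + h p.1), hmem2, ?_⟩
      rw [hgval _ hmem2]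
      apply Subtype.ext
      apply Prod.ext
      · show B + p.1 = e'.val.1
        omega
      · show e'.val.2 + h p.1 - h p.1 = e'.val.2
        omega
  set f : eesTri.E → eesGrid.E := fun e => (e.val.1 - B, e.val.2 + h (e.val.1 - B))
    with hfdef
  have hfg : ∀ (p : eesGrid.E) (hp : p ∈ Y' \ Y), f (g p) = p := by
    intro p hp
    rw [hgval p hp]
    have hp' := (hdiff p).mp hp
    show ((B + p.1 - B, (p.2 - h p.1) + h (B + p.1 - B)) : ℕ × ℕ) = p
    have hr1 : B + p.1 - B = p.1 := by omega
    rw [hr1]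
    exact Prod.ext rfl (by omega)
  obtain ⟨d, hdY', hdY⟩ := Set.exists_of_ssubset hss
  have hdmem : d ∈ Y' \ Y := ⟨hdY', hdY⟩
  refine ⟨X', ⟨hX, hconfX', ?_, ?_⟩, ⟨f, ?_, ?_, fun e _ => rfl⟩, hconfX'⟩
  · exact Set.subset_union_left
  · intro hsub
    exact himg_not d hdmem (hsub (Or.inr ⟨d, hdmem, rfl⟩))
  · rw [hXdiff]
    refine ⟨?_, ?_, ?_⟩
    · rintro a ⟨p, hp, rfl⟩
      rw [hfg p hp]; exact hp
    · rintro a ⟨p, hp, rfl⟩ b ⟨q, hq, rfl⟩ hab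
      rw [hfg p hp, hfg q hq] at hab
      rw [hab]
    · rintro p hp
      exact ⟨g p, ⟨p, hp, rfl⟩, hfg p hp⟩
  · rw [hXdiff]
    rintro a ⟨p, hp, rfl⟩ b ⟨q, hq, rfl⟩
    rw [hfg p hp, hfg q hq, hgval p hp, hgval q hq]
    have hp' := (hdiff p).mp hp
    have hq' := (hdiff q).mp hq
    show (B + p.1 = B + q.1 ∧ p.2 - h p.1 ≤ q.2 - h q.1) ↔ (p.1 = q.1 ∧ p.2 ≤ q.2)
    constructor
    · rintro ⟨h1, h2⟩
      have h1' : p.1 = q.1 := by omega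
      have hhq : h p.1 = h q.1 := by rw [h1']
      exact ⟨h1', by omega⟩
    · rintro ⟨h1, h2⟩
      have hhq : h p.1 = h q.1 := by rw [h1]
      exact ⟨by omega, by omega⟩

end InfEESAux

open InfEESAux in
theorem infinite_ees_pb_not_whb_hb :
    PES.PBisimilar eesTri eesGrid ∧
    ¬ PES.WHBisimilar eesTri eesGrid ∧ ¬ PES.HBisimilar eesTri eesGrid := by
  refine ⟨?_, ?_, ?_⟩
  · -- pomset bisimilar
    refine ⟨fun X Y => eesTri.Config X ∧ eesGrid.Config Y,
      ⟨tri_config_empty, grid_config_empty⟩, ?_⟩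
    rintro X Y ⟨hX, hY⟩
    constructor
    · intro X' ht
      obtain ⟨Y', hYt, hiso, hY'⟩ := forward_match hY ht
      exact ⟨Y', hYt, hiso, ht.2.1, hY'⟩
    · intro Y' ht
      obtain ⟨X', hXt, hiso, hX'⟩ := backward_match hX ht
      exact ⟨X', hXt, hiso, hX', ht.2.1⟩
  · -- not weak history preserving bisimilar
    rintro ⟨R, hR0, hR⟩
    obtain ⟨Y1, hY1t, hRY1⟩ := ((hR ∅ ∅ hR0).2.1 () {e00} trans_e00)
    obtain ⟨-, hY1conf, q, hq0, rfl, -⟩ := hY1t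
    rw [LawfulSingleton.insert_empty_eq] at hY1conf hRY1
    have hq2 : (q : ℕ × ℕ).2 = 0 := grid_singleton hY1conf
    have hqeq : q = ((q.1, 0) : eesGrid.E) := Prod.ext rfl hq2
    rw [hqeq] at hRY1
    obtain ⟨X2, hX2t, hRX2⟩ :=
      (hR _ _ hRY1).2.2 () _ (grid_trans_pair q.1)
    have hiso2 := (hR _ _ hRX2).1
    obtain ⟨-, -, e, heX, rfl, -⟩ := hX2t
    obtain ⟨f, hf⟩ := hiso2
    exact no_iso e (fun h => heX (Set.mem_singleton_iff.mpr h)) q.1 f hf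
  · -- not history preserving bisimilar
    rintro ⟨R, ⟨f0, hR0⟩, hR⟩
    obtain ⟨Y1, f1, hY1t, hRY1, -⟩ := ((hR ∅ ∅ f0 hR0).2.1 () {e00} trans_e00)
    obtain ⟨-, hY1conf, q, hq0, rfl, -⟩ := hY1t
    rw [LawfulSingleton.insert_empty_eq] at hY1conf hRY1
    have hq2 : (q : ℕ × ℕ).2 = 0 := grid_singleton hY1conf
    have hqeq : q = ((q.1, 0) : eesGrid.E) := Prod.ext rfl hq2
    rw [hqeq] at hRY1
    obtain ⟨X2, f2, hX2t, hRX2, -⟩ :=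
      (hR _ _ _ hRY1).2.2 () _ (grid_trans_pair q.1)
    have hiso2 := (hR _ _ _ hRX2).1
    obtain ⟨-, -, e, heX, rfl, -⟩ := hX2t
    exact no_iso e (fun h => heX (Set.mem_singleton_iff.mpr h)) q.1 f2 hiso2
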